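/- Fix reals p₀ < p₁ < 0, Γ > 0, λ > 0, and g⟦ρ⟧ < 0. Consider the zero-mode problem (P₀): find M : [p₀,0] → ℝ continuous, twice continuously differentiable on [p₀,p₁] and on [p₁,0], with M″ = 0 on (p₀,p₁) and on (p₁,0), M(p₀) = 0, M(0) = M(p₁), and Γ³M′(p₁⁺) − λ³M′(p₁⁻) = g⟦ρ⟧M(p₁). Then (P₀) has a solution that is not identically zero if and only if λ³ = −g⟦ρ⟧(p₁−p₀). -/

import Mathlib

open Set

/-- **The zero-mode problem (P₀).**
For `p₀ < p₁ < 0`, `Γ > 0`, `λ > 0` and `gρ < 0`: the problem of finding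
`M : [p₀,0] → ℝ` continuous, twice continuously differentiable on `[p₀,p₁]` and
on `[p₁,0]`, with `M″ = 0` on `(p₀,p₁)` and on `(p₁,0)`, `M(p₀) = 0`,
`M(0) = M(p₁)` and `Γ³M′(p₁⁺) − λ³M′(p₁⁻) = gρ·M(p₁)` has a solution that is not
identically zero if and only if `λ³ = −gρ(p₁−p₀)`. -/
lemma affine_aux (a b : ℝ) (hab : a < b) (M : ℝ → ℝ)
    (hc : ContinuousOn M (Icc a b)) (h2 : ContDiffOn ℝ 2 M (Icc a b))
    (hdd : ∀ p ∈ Ioo a b, deriv (deriv M) p = 0) :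
    ∃ c, ∀ x ∈ Icc a b, M x = M a + c * (x - a) := by
  have h2o : ContDiffOn ℝ 2 M (Ioo a b) := h2.mono Ioo_subset_Icc_self
  have hder : ContDiffOn ℝ 1 (deriv M) (Ioo a b) :=
    h2o.deriv_of_isOpen isOpen_Ioo (by norm_num)
  have hMdiff : ∀ t ∈ Ioo a b, DifferentiableAt ℝ M t := fun t ht =>
    (h2o.differentiableOn (by norm_num) t ht).differentiableAt (isOpen_Ioo.mem_nhds ht)
  have hderdiff : ∀ t ∈ Ioo a b, DifferentiableAt ℝ (deriv M) t := fun t ht =>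
    (hder.differentiableOn (by norm_num) t ht).differentiableAt (isOpen_Ioo.mem_nhds ht)
  -- deriv M is constant on Ioo a b
  have hconst : ∀ x ∈ Ioo a b, ∀ y ∈ Ioo a b, x ≤ y → deriv M y = deriv M x := by
    intro x hx y hy hxy
    have hsub : Icc x y ⊆ Ioo a b := fun t ht => ⟨lt_of_lt_of_le hx.1 ht.1, lt_of_le_of_lt ht.2 hy.2⟩
    have := constant_of_has_deriv_right_zero
      (f := deriv M) (a := x) (b := y)
      (hder.continuousOn.mono hsub)
      (fun t ht => by
        have ht' : t ∈ Ioo a b := hsub ⟨ht.1, ht.2.le⟩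
        have h := (hderdiff t ht').hasDerivAt
        rw [hdd t ht'] at h
        exact h.hasDerivWithinAt)
    exact this y (right_mem_Icc.mpr hxy)
  set m := (a + b) / 2 with hm
  have hmem : m ∈ Ioo a b := ⟨by simp [hm]; linarith, by simp [hm]; linarith⟩
  set c := deriv M m with hcdef
  have hderc : ∀ x ∈ Ioo a b, deriv M x = c := by
    intro x hx
    rcases le_total x m with h | h
    · exact (hconst x hx m hmem h).symm
    · exact hconst m hmem x hx h
  -- M y - M x = c (y - x) on Ioo
  have key : ∀ x ∈ Ioo a b, ∀ y ∈ Ioo a b, x ≤ y → M y - c * y = M x - c * x := by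
    intro x hx y hy hxy
    have hsub : Icc x y ⊆ Ioo a b := fun t ht => ⟨lt_of_lt_of_le hx.1 ht.1, lt_of_le_of_lt ht.2 hy.2⟩
    have := constant_of_has_deriv_right_zero
      (f := fun t => M t - c * t) (a := x) (b := y)
      (((hc.mono (hsub.trans Ioo_subset_Icc_self)).sub ((continuous_const.mul continuous_id).continuousOn)))
      (fun t ht => by
        have ht' : t ∈ Ioo a b := hsub ⟨ht.1, ht.2.le⟩
        have h1 : HasDerivAt M c t := by
          have := (hMdiff t ht').hasDerivAt
          rwa [hderc t ht'] at this
        have h2 : HasDerivAt (fun t : ℝ => c * t) c t := by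
          simpa using (hasDerivAt_id t).const_mul c
        have h3 := h1.sub h2; rw [sub_self] at h3; exact h3.hasDerivWithinAt)
    exact this y (right_mem_Icc.mpr hxy)
  have key2 : ∀ x ∈ Ioo a b, M x = M m + c * (x - m) := by
    intro x hx
    rcases le_total x m with h | h
    · have := key x hx m hmem h; ring_nf; ring_nf at this; linarith
    · have := key m hmem x hx h; ring_nf; ring_nf at this; linarith
  have key3 : ∀ x ∈ Icc a b, M x = M m + c * (x - m) := by
    intro x hx
    have hxcl : x ∈ closure (Ioo a b) := by rw [closure_Ioo hab.ne]; exact hx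
    have hne : (nhdsWithin x (Ioo a b)).NeBot := mem_closure_iff_nhdsWithin_neBot.mp hxcl
    have t1 : Filter.Tendsto M (nhdsWithin x (Ioo a b)) (nhds (M x)) :=
      (hc x hx).mono_left (nhdsWithin_mono x Ioo_subset_Icc_self)
    have t2 : Filter.Tendsto M (nhdsWithin x (Ioo a b)) (nhds (M m + c * (x - m))) := by
      have tcont : Filter.Tendsto (fun t => M m + c * (t - m)) (nhdsWithin x (Ioo a b))
          (nhds (M m + c * (x - m))) :=
        ((continuous_const.add (continuous_const.mul (continuous_id.sub continuous_const))).tendsto x).mono_left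
          nhdsWithin_le_nhds
      refine tcont.congr' ?_
      filter_upwards [self_mem_nhdsWithin] with t ht
      exact (key2 t ht).symm
    exact tendsto_nhds_unique t1 t2
  refine ⟨c, fun x hx => ?_⟩
  have h1 := key3 x hx
  have h2 := key3 a (left_mem_Icc.mpr hab.le)
  rw [h1, h2]; ring

theorem stmt_6 (p₀ p₁ Γ lam gρ : ℝ)
    (h₀₁ : p₀ < p₁) (h₁ : p₁ < 0) (hΓ : 0 < Γ) (hlam : 0 < lam) (hgρ : gρ < 0) :
    (∃ M : ℝ → ℝ,
      (ContinuousOn M (Set.Icc p₀ 0) ∧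
        ContDiffOn ℝ 2 M (Set.Icc p₀ p₁) ∧
        ContDiffOn ℝ 2 M (Set.Icc p₁ 0) ∧
        (∀ p ∈ Set.Ioo p₀ p₁, deriv (deriv M) p = 0) ∧
        (∀ p ∈ Set.Ioo p₁ 0, deriv (deriv M) p = 0) ∧
        M p₀ = 0 ∧ M 0 = M p₁ ∧
        Γ ^ 3 * derivWithin M (Set.Icc p₁ 0) p₁
          - lam ^ 3 * derivWithin M (Set.Icc p₀ p₁) p₁ = gρ * M p₁) ∧
      ¬(∀ p ∈ Set.Icc p₀ 0, M p = 0)) ↔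
    lam ^ 3 = -gρ * (p₁ - p₀) := by
  constructor
  · rintro ⟨M, ⟨hcont, h2l, h2r, hddl, hddr, hM0, hMtop, hjump⟩, hnz⟩
    obtain ⟨c₁, hc₁⟩ := affine_aux p₀ p₁ h₀₁ M
      (hcont.mono (Icc_subset_Icc le_rfl h₁.le)) h2l hddl
    obtain ⟨c₂, hc₂⟩ := affine_aux p₁ 0 h₁ M
      (hcont.mono (Icc_subset_Icc h₀₁.le le_rfl)) h2r hddr
    have hc₂0 : c₂ = 0 := by
      have := hc₂ 0 (right_mem_Icc.mpr h₁.le)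
      rw [hMtop] at this
      have : c₂ * (0 - p₁) = 0 := by linarith
      rcases mul_eq_zero.mp this with h | h
      · exact h
      · exact absurd h (by intro h; linarith)
    have hMp₁ : M p₁ = c₁ * (p₁ - p₀) := by
      have := hc₁ p₁ (right_mem_Icc.mpr h₀₁.le)
      rw [hM0] at this; linarith
    have hudl : UniqueDiffWithinAt ℝ (Icc p₀ p₁) p₁ :=
      (uniqueDiffOn_Icc h₀₁) p₁ (right_mem_Icc.mpr h₀₁.le)
    have hudr : UniqueDiffWithinAt ℝ (Icc p₁ 0) p₁ :=
      (uniqueDiffOn_Icc h₁) p₁ (left_mem_Icc.mpr h₁.le)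
    have hdwl : derivWithin M (Icc p₀ p₁) p₁ = c₁ := by
      have hEq : derivWithin M (Icc p₀ p₁) p₁
          = derivWithin (fun x => M p₀ + c₁ * (x - p₀)) (Icc p₀ p₁) p₁ :=
        derivWithin_congr (fun x hx => hc₁ x hx) (hc₁ p₁ (right_mem_Icc.mpr h₀₁.le))
      rw [hEq]
      have h : HasDerivAt (fun x => M p₀ + c₁ * (x - p₀)) c₁ p₁ := by
        simpa using (((hasDerivAt_id p₁).sub_const p₀).const_mul c₁).const_add (M p₀)
      exact h.hasDerivWithinAt.derivWithin hudl
    have hdwr : derivWithin M (Icc p₁ 0) p₁ = 0 := by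
      have hEq : derivWithin M (Icc p₁ 0) p₁
          = derivWithin (fun _ => M p₁) (Icc p₁ 0) p₁ :=
        derivWithin_congr (fun x hx => by simp [hc₂ x hx, hc₂0])
          rfl
      rw [hEq]
      exact (hasDerivWithinAt_const p₁ _ (M p₁)).derivWithin hudr
    rw [hdwl, hdwr, hMp₁] at hjump
    have hc₁ne : c₁ ≠ 0 := by
      intro hc
      apply hnz
      intro x hx
      rcases le_total x p₁ with h | h
      · rw [hc₁ x ⟨hx.1, h⟩, hM0, hc]; ring
      · rw [hc₂ x ⟨h, hx.2⟩, hc₂0, hMp₁, hc]; ring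
    have : (-(lam ^ 3)) * c₁ = (gρ * (p₁ - p₀)) * c₁ := by ring_nf; ring_nf at hjump; linarith
    have := mul_right_cancel₀ hc₁ne this
    linarith
  · intro hlameq
    refine ⟨fun p => min (p - p₀) (p₁ - p₀), ⟨?_, ?_, ?_, ?_, ?_, ?_, ?_, ?_⟩, ?_⟩
    · exact ((continuous_id.sub continuous_const).min continuous_const).continuousOn
    · exact ((contDiff_id.sub contDiff_const).contDiffOn).congr
        (fun x hx => min_eq_left (by linarith [hx.2]))
    · exact (contDiffOn_const).congr (fun x hx => min_eq_right (by linarith [hx.1]))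
    · intro p hp
      have hev : deriv (fun p => min (p - p₀) (p₁ - p₀)) =ᶠ[nhds p] fun _ => (1:ℝ) := by
        filter_upwards [Iio_mem_nhds hp.2] with x hx
        have hev2 : (fun p => min (p - p₀) (p₁ - p₀)) =ᶠ[nhds x] fun y => y - p₀ := by
          filter_upwards [Iio_mem_nhds hx] with y hy
          exact min_eq_left (by simp only [mem_Iio] at hy; linarith)
        rw [hev2.deriv_eq]
        simp
      rw [hev.deriv_eq]
      simp
    · intro p hp
      have hev : deriv (fun p => min (p - p₀) (p₁ - p₀)) =ᶠ[nhds p] fun _ => (0:ℝ) := by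
        filter_upwards [Ioi_mem_nhds hp.1] with x hx
        have hev2 : (fun p => min (p - p₀) (p₁ - p₀)) =ᶠ[nhds x] fun _ => p₁ - p₀ := by
          filter_upwards [Ioi_mem_nhds hx] with y hy
          exact min_eq_right (by simp only [mem_Ioi] at hy; linarith)
        rw [hev2.deriv_eq]
        simp
      rw [hev.deriv_eq]
      simp
    · show min (p₀ - p₀) (p₁ - p₀) = 0
      rw [min_eq_left (by linarith)]; ring
    · show min ((0:ℝ) - p₀) (p₁ - p₀) = min (p₁ - p₀) (p₁ - p₀)
      rw [min_eq_right (by linarith), min_eq_right le_rfl]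
    · have hudl : UniqueDiffWithinAt ℝ (Icc p₀ p₁) p₁ :=
        (uniqueDiffOn_Icc h₀₁) p₁ (right_mem_Icc.mpr h₀₁.le)
      have hudr : UniqueDiffWithinAt ℝ (Icc p₁ 0) p₁ :=
        (uniqueDiffOn_Icc h₁) p₁ (left_mem_Icc.mpr h₁.le)
      have hl : derivWithin (fun p => min (p - p₀) (p₁ - p₀)) (Icc p₀ p₁) p₁ = 1 := by
        have hEq : derivWithin (fun p => min (p - p₀) (p₁ - p₀)) (Icc p₀ p₁) p₁
            = derivWithin (fun p => p - p₀) (Icc p₀ p₁) p₁ :=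
          derivWithin_congr (fun x hx => min_eq_left (by linarith [hx.2]))
            (min_eq_left le_rfl)
        rw [hEq]
        exact ((hasDerivAt_id p₁).sub_const p₀).hasDerivWithinAt.derivWithin hudl
      have hr : derivWithin (fun p => min (p - p₀) (p₁ - p₀)) (Icc p₁ 0) p₁ = 0 := by
        have hEq : derivWithin (fun p => min (p - p₀) (p₁ - p₀)) (Icc p₁ 0) p₁
            = derivWithin (fun _ => p₁ - p₀) (Icc p₁ 0) p₁ :=
          derivWithin_congr (fun x hx => min_eq_right (by linarith [hx.1]))
            (min_eq_right le_rfl)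
        rw [hEq]
        exact (hasDerivWithinAt_const p₁ _ (p₁ - p₀)).derivWithin hudr
      rw [hl, hr]
      show _ = gρ * min (p₁ - p₀) (p₁ - p₀)
      rw [min_eq_right le_rfl, hlameq]; ring
    · intro h
      have := h p₁ ⟨h₀₁.le, h₁.le⟩
      simp only [min_self] at this
      linarith
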